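/- The scalar curvature τ vanishes if and only if there exists ε ∈ {−1, 1} such that θ₁ = εθ₂ and ω₁ = εω₂ (equivalently, θ₁ ∓ θ₂ = ω₁ ∓ ω₂ = 0 for a common choice of sign). -/

import Mathlib

noncomputable section

/-- `V = ℝ³`. -/
abbrev V : Type := Fin 3 → ℝ

/-- The standard basis `e₀, e₁, e₂` of `V = ℝ³`. -/
def e : Fin 3 → V := fun i => Pi.single i 1

/-- The B-metric `g`: the symmetric bilinear form with
`g(e₀,e₀) = g(e₁,e₁) = 1`, `g(e₂,e₂) = -1`, `g(eᵢ,eⱼ) = 0` for `i ≠ j`. -/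
def gB (x y : V) : ℝ := x 0 * y 0 + x 1 * y 1 - x 2 * y 2

/-- The linear map `φ` with `φe₀ = 0`, `φe₁ = e₂`, `φe₂ = -e₁`. -/
def phi : V → V := fun x => ![0, -(x 2), x 1]

/-- The 1-form `η` with `η(e₀) = 1`, `η(e₁) = η(e₂) = 0`. -/
def eta (x : V) : ℝ := x 0

/-- The signs `ε₀ = ε₁ = 1`, `ε₂ = -1`. -/
def eps : Fin 3 → ℝ := ![1, 1, -1]

/-- The curvature tensor `R(x,y)z = ∇ₓ(∇ᵧz) − ∇ᵧ(∇ₓz) − ∇_{[x,y]}z`. -/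
def Rc (br nabla : V →ₗ[ℝ] V →ₗ[ℝ] V) (x y z : V) : V :=
  nabla x (nabla y z) - nabla y (nabla x z) - nabla (br x y) z

/-- The curvature tensor of type (0,4): `R(x,y,z,w) = g(R(x,y)z, w)`. -/
def R4 (br nabla : V →ₗ[ℝ] V →ₗ[ℝ] V) (x y z w : V) : ℝ :=
  gB (Rc br nabla x y z) w

/-- The Ricci tensor `ρ(y,z) = R(e₀,y,z,e₀) + R(e₁,y,z,e₁) − R(e₂,y,z,e₂)`. -/
def ric (br nabla : V →ₗ[ℝ] V →ₗ[ℝ] V) (y z : V) : ℝ :=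
  R4 br nabla (e 0) y z (e 0) + R4 br nabla (e 1) y z (e 1) - R4 br nabla (e 2) y z (e 2)

/-- The scalar curvature `τ = ρ(e₀,e₀) + ρ(e₁,e₁) − ρ(e₂,e₂)`. -/
def scal (br nabla : V →ₗ[ℝ] V →ₗ[ℝ] V) : ℝ :=
  ric br nabla (e 0) (e 0) + ric br nabla (e 1) (e 1) - ric br nabla (e 2) (e 2)

/-- The associated Ricci tensor
`ρ*(y,z) = R(e₀,y,z,φe₀) + R(e₁,y,z,φe₁) − R(e₂,y,z,φe₂)`. -/
def ricStar (br nabla : V →ₗ[ℝ] V →ₗ[ℝ] V) (y z : V) : ℝ :=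
  R4 br nabla (e 0) y z (phi (e 0)) + R4 br nabla (e 1) y z (phi (e 1))
    - R4 br nabla (e 2) y z (phi (e 2))

/-- The associated scalar curvature `τ* = ρ*(e₀,e₀) + ρ*(e₁,e₁) − ρ*(e₂,e₂)`. -/
def scalStar (br nabla : V →ₗ[ℝ] V →ₗ[ℝ] V) : ℝ :=
  ricStar br nabla (e 0) (e 0) + ricStar br nabla (e 1) (e 1) - ricStar br nabla (e 2) (e 2)

/-- The covariant derivative of `φ`: `(∇φ)(x,y) = ∇ₓ(φy) − φ(∇ₓy)`. -/
def nablaPhi (nabla : V →ₗ[ℝ] V →ₗ[ℝ] V) (x y : V) : V :=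
  nabla x (phi y) - phi (nabla x y)

/-- The square norm `‖∇φ‖² = Σ_{i,k} εᵢεₖ g((∇φ)(eᵢ,eₖ), (∇φ)(eᵢ,eₖ))`. -/
def normNablaPhiSq (nabla : V →ₗ[ℝ] V →ₗ[ℝ] V) : ℝ :=
  ∑ i : Fin 3, ∑ k : Fin 3,
    eps i * eps k * gB (nablaPhi nabla (e i) (e k)) (nablaPhi nabla (e i) (e k))


def Gv (a b c d : ℝ) (x y : V) : V :=
  ![ -d*(x 0*y 1 - x 1*y 0) + c*(x 0*y 2 - x 2*y 0),
     (a/2)*(x 1*y 2 - x 2*y 1),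
     (b/2)*(x 1*y 2 - x 2*y 1) ]

def Nv (a b c d : ℝ) (x y : V) : V :=
  ![ -d*(x 0*y 1) + c*(x 0*y 2),
     d*(x 0*y 0) + (a/2)*(x 1*y 2) - (b/2)*(x 2*y 2),
     c*(x 0*y 0) + (a/2)*(x 1*y 1) - (b/2)*(x 2*y 1) ]

lemma decompV (v : V) : v = v 0 • e 0 + v 1 • e 1 + v 2 • e 2 := by
  funext k
  fin_cases k <;> simp [e, Pi.single_apply]

set_option maxHeartbeats 2000000 in
/-- scalar flatness criterion. -/
theorem statement15
    (θ₁ θ₂ ω₁ ω₂ : ℝ) (hcomm : θ₁ * ω₂ = θ₂ * ω₁)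
    (br : V →ₗ[ℝ] V →ₗ[ℝ] V)
    (hskew : ∀ x y : V, br x y = - br y x)
    (h01 : br (e 0) (e 1) = (-ω₂) • e 0)
    (h02 : br (e 0) (e 2) = ω₁ • e 0)
    (h12 : br (e 1) (e 2) = ((1/2) * θ₁) • e 1 + ((1/2) * θ₂) • e 2)
    (nabla : V →ₗ[ℝ] V →ₗ[ℝ] V)
    (hKoszul : ∀ x y z : V, 2 * gB (nabla x y) z =
      gB (br x y) z + gB (br z x) y + gB (br z y) x) :
    scal br nabla = 0 ↔
      ∃ ε : ℝ, (ε = 1 ∨ ε = -1) ∧ θ₁ = ε * θ₂ ∧ ω₁ = ε * ω₂ := by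
  have hxx : ∀ x : V, br x x = 0 := by
    intro x
    have h := hskew x x
    have h2 : (2:ℝ) • br x x = 0 := by
      rw [two_smul]; nth_rewrite 1 [h]; abel
    simpa using h2
  have h10 : br (e 1) (e 0) = -((-ω₂) • e 0) := by rw [hskew, h01]
  have h20 : br (e 2) (e 0) = -(ω₁ • e 0) := by rw [hskew, h02]
  have h21 : br (e 2) (e 1) = -(((1/2) * θ₁) • e 1 + ((1/2) * θ₂) • e 2) := by
    rw [hskew, h12]
  have hbr : ∀ x y : V, br x y = Gv θ₁ θ₂ ω₁ ω₂ x y := by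
    intro x y
    conv_lhs => rw [decompV x, decompV y]
    simp only [map_add, map_smul, LinearMap.add_apply, LinearMap.smul_apply,
      h01, h02, h12, h10, h20, h21, hxx]
    funext k
    fin_cases k <;> simp [Gv, e, Pi.single_apply] <;> ring
  have hn : ∀ x y : V, nabla x y = Nv θ₁ θ₂ ω₁ ω₂ x y := by
    intro x y
    have k0 := hKoszul x y (e 0)
    have k1 := hKoszul x y (e 1)
    have k2 := hKoszul x y (e 2)
    simp only [hbr, gB, Gv, e, Pi.single_apply, Fin.ext_iff, Fin.val_zero,
      Fin.val_one, Fin.val_two] at k0 k1 k2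
    norm_num [Matrix.cons_val_two, Matrix.tail_cons, Matrix.head_cons] at k0 k1 k2
    funext k
    fin_cases k <;> simp [Nv] <;> linarith
  have htau : scal br nabla =
      (θ₁^2 - θ₂^2)/2 + (θ₁*ω₁ - θ₂*ω₂) + 2*(ω₁^2 - ω₂^2) := by
    simp only [scal, ric, R4, Rc, hn, hbr]
    simp [gB, Nv, Gv, e, Pi.single_apply]
    ring
  rw [htau]
  constructor
  · intro h
    by_cases hw2 : ω₂ = 0
    · by_cases hw1 : ω₁ = 0
      · have hfac : (θ₁ - θ₂) * (θ₁ + θ₂) = 0 := by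
          rw [hw1, hw2] at h; nlinarith [h]
        rcases mul_eq_zero.mp hfac with h' | h'
        · exact ⟨1, Or.inl rfl, by linarith, by rw [hw1, hw2]; ring⟩
        · exact ⟨-1, Or.inr rfl, by linarith, by rw [hw1, hw2]; ring⟩
      · exfalso
        have hθ2 : θ₂ = 0 := by
          have hc : θ₂ * ω₁ = 0 := by rw [← hcomm, hw2, mul_zero]
          rcases mul_eq_zero.mp hc with h' | h'
          · exact h'
          · exact absurd h' hw1
        rw [hw2, hθ2] at h
        have hw1sq : ω₁^2 > 0 := by positivity
        nlinarith [sq_nonneg (θ₁ + ω₁)]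
    · set l := θ₂ / ω₂ with hl
      have hθ2' : θ₂ = l * ω₂ := (div_mul_cancel₀ θ₂ hw2).symm
      have hθ1' : θ₁ = l * ω₁ := by
        rw [hl, div_mul_eq_mul_div, eq_div_iff hw2]
        linarith [hcomm]
      rw [hθ1', hθ2'] at h
      have hfac : (ω₁^2 - ω₂^2) * (l^2/2 + l + 2) = 0 := by linear_combination h
      have hpos : l^2/2 + l + 2 > 0 := by nlinarith [sq_nonneg (l + 1)]
      have hww : (ω₁ - ω₂) * (ω₁ + ω₂) = 0 := by
        rcases mul_eq_zero.mp hfac with h' | h'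
        · linear_combination h'
        · exact absurd h' (ne_of_gt hpos)
      rcases mul_eq_zero.mp hww with h' | h'
      · have : ω₁ = ω₂ := by linarith
        exact ⟨1, Or.inl rfl, by rw [hθ1', hθ2', this]; ring, by rw [this]; ring⟩
      · have : ω₁ = -ω₂ := by linarith
        exact ⟨-1, Or.inr rfl, by rw [hθ1', hθ2', this]; ring, by rw [this]; ring⟩
  · rintro ⟨ε, hε, h1, h2⟩
    rcases hε with rfl | rfl
    · rw [h1, h2]; ring
    · rw [h1, h2]; ring
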